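/- arXiv:2205.15344 — 4 statements merged into one kernel-verified Lean document; each statement's English description precedes it below -/
import Mathlib

section
/- In the derived category of dg modules over the dg algebra S = ℂ[y] with y in degree −1 and zero differential, the homotopy colimit E_n of the direct system X_0(n) →(y) X_1(n−1) →(y) X_2(n−2) → ⋯, where X_i = ℂ[y]/(y^{i+1}), is isomorphic to the dg module ℂ[y^{−1}](n). -/
noncomputable section

open scoped Classical DirectSum

/-!  We model dg modules over the dg algebra `S = ℂ[y]` (`y` in cohomological degree `-1`,
zero differential) degreewise.  All dg modules appearing here have zero differential, so a
dg module is a family of `ℂ`-vector spaces `(C m)_{m ∈ ℤ}` together with degree `-1`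
operators (the action of `y`).

* `X_i = ℂ[y]/(y^{i+1})` shifted by `(n - i)` has degree-`m` component spanned by
  `y^{i-n-m}`, i.e. it is `ℂ` exactly when `-n ≤ m ≤ i - n`; we record this component as
  the submodule `S13 n i m ⊆ ℂ` (so the coordinate is the coefficient of the monomial).
* `ℂ[y⁻¹](n)` has degree-`m` component spanned by `y^{-(n+m)}`, i.e. `ℂ` exactly when
  `-n ≤ m`; recorded as `T13 n m ⊆ ℂ`.
-/

/-- Degree-`m` component of `X_i(n-i) = (ℂ[y]/(y^{i+1}))(n-i)`. -/
def S13 (n : ℤ) (i : ℕ) (m : ℤ) : Submodule ℂ ℂ :=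
  if -n ≤ m ∧ m ≤ (i : ℤ) - n then ⊤ else ⊥

/-- Degree-`m` component of `ℂ[y⁻¹](n)`. -/
def T13 (n m : ℤ) : Submodule ℂ ℂ :=
  if -n ≤ m then ⊤ else ⊥

/-- The action of `y` on `X_i(n-i)`, from degree `m` to degree `m-1`. -/
def yS (n : ℤ) (i : ℕ) (m : ℤ) : ↥(S13 n i m) →ₗ[ℂ] ↥(S13 n i (m - 1)) :=
  if h : S13 n i m ≤ S13 n i (m - 1) then Submodule.inclusion h else 0

/-- The action of `y` on `ℂ[y⁻¹](n)`, from degree `m` to degree `m-1`. -/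
def yT (n m : ℤ) : ↥(T13 n m) →ₗ[ℂ] ↥(T13 n (m - 1)) :=
  if h : T13 n m ≤ T13 n (m - 1) then Submodule.inclusion h else 0

lemma S13_mono (n : ℤ) (i : ℕ) (m : ℤ) : S13 n i m ≤ S13 n (i + 1) m := by
  unfold S13
  split_ifs with h1 h2
  · exact le_rfl
  · exfalso; push_cast at h2 ⊢; omega
  · exact bot_le
  · exact le_rfl

lemma S13_le_T13 (n : ℤ) (i : ℕ) (m : ℤ) : S13 n i m ≤ T13 n m := by
  unfold S13 T13
  split_ifs with h1 h2
  · exact le_rfl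
  · exact absurd h1.1 h2
  · exact bot_le
  · exact bot_le

/-- The degree-`m` component of the coproduct (direct sum) `⊕_{i ∈ ℕ} X_i(n-i)` of dg
`S`-modules. -/
abbrev Prod13 (n m : ℤ) := ⨁ i : ℕ, ↥(S13 n i m)

/-- The `y`-action on `⊕_{i ∈ ℕ} X_i(n-i)`, in degree `m`. -/
def yProd (n m : ℤ) : Prod13 n m →ₗ[ℂ] Prod13 n (m - 1) :=
  DFinsupp.mapRange.linearMap (fun i => yS n i m)

/-- The shift map on `⊕_{i ∈ ℕ} X_i(n-i)` whose `i`-th component is the structure map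
"multiplication by `y`" `X_i(n-i) → X_{i+1}(n-i-1)` of the direct system (which is the
coordinatewise inclusion), in degree `m`. -/
def shift13 (n m : ℤ) : Prod13 n m →ₗ[ℂ] Prod13 n m :=
  DirectSum.toModule ℂ ℕ (Prod13 n m)
    (fun i => (DirectSum.lof ℂ ℕ (fun i' => ↥(S13 n i' m)) (i + 1)) ∘ₗ
      Submodule.inclusion (S13_mono n i m))

/-- The map `1 - (shift)` on `⊕_{i ∈ ℕ} X_i(n-i)`, in degree `m`; the homotopy colimit
`E_n` of the direct system `X_0(n) →y X_1(n-1) →y X_2(n-2) → ⋯` is by definition the cone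
of this map in the derived category of dg `S`-modules. -/
def oneMinusShift (n m : ℤ) : Prod13 n m →ₗ[ℂ] Prod13 n m :=
  LinearMap.id - shift13 n m


/-! ### Auxiliary lemmas for the proof -/

lemma S13_mono' (n : ℤ) {i j : ℕ} (m : ℤ) (h : i ≤ j) : S13 n i m ≤ S13 n j m := by
  unfold S13
  have h' : (i : ℤ) ≤ j := by exact_mod_cast h
  split_ifs with h1 h2
  · exact le_rfl
  · exfalso; omega
  · exact bot_le
  · exact le_rfl

lemma S13_le_pred (n : ℤ) (i : ℕ) (m : ℤ) (hm : m ≠ -n) : S13 n i m ≤ S13 n i (m - 1) := by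
  unfold S13
  split_ifs with h1 h2
  · exact le_rfl
  · exfalso; omega
  · exact bot_le
  · exact le_rfl

lemma T13_le_pred (n m : ℤ) (hm : m ≠ -n) : T13 n m ≤ T13 n (m - 1) := by
  unfold T13
  split_ifs with h1 h2
  · exact le_rfl
  · exfalso; omega
  · exact bot_le
  · exact le_rfl

lemma yS_coe (n : ℤ) (i : ℕ) (m : ℤ) (x : ↥(S13 n i m)) :
    ((yS n i m x : ℂ)) = if m = -n then 0 else (x : ℂ) := by
  unfold yS
  split_ifs with h hm hm
  · have hx := h x.2
    have hb : S13 n i (m - 1) = ⊥ := by unfold S13; rw [if_neg]; omega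
    rw [hb, Submodule.mem_bot] at hx
    simpa [Submodule.coe_inclusion] using hx
  · simp [Submodule.coe_inclusion]
  · simp
  · exact absurd (S13_le_pred n i m hm) h

lemma yT_coe (n m : ℤ) (x : ↥(T13 n m)) :
    ((yT n m x : ℂ)) = if m = -n then 0 else (x : ℂ) := by
  unfold yT
  split_ifs with h hm hm
  · have hx := h x.2
    have hb : T13 n (m - 1) = ⊥ := by unfold T13; rw [if_neg]; omega
    rw [hb, Submodule.mem_bot] at hx
    simpa [Submodule.coe_inclusion] using hx
  · simp [Submodule.coe_inclusion]
  · simp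
  · exact absurd (T13_le_pred n m hm) h

lemma shift13_lof (n m : ℤ) (i : ℕ) (x : ↥(S13 n i m)) :
    shift13 n m (DirectSum.lof ℂ ℕ (fun i' => ↥(S13 n i' m)) i x) =
      DirectSum.lof ℂ ℕ (fun i' => ↥(S13 n i' m)) (i + 1)
        (Submodule.inclusion (S13_mono n i m) x) := by
  unfold shift13
  exact DirectSum.toModule_lof (N := Prod13 n m)
    (φ := fun i => (DirectSum.lof ℂ ℕ (fun i' => ↥(S13 n i' m)) (i + 1)) ∘ₗ
      Submodule.inclusion (S13_mono n i m)) ℂ i x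

lemma coe_lof_apply (n m : ℤ) (k j : ℕ) (z : ↥(S13 n k m)) :
    ((DirectSum.lof ℂ ℕ (fun i' => ↥(S13 n i' m)) k z) j : ℂ) = if k = j then (z : ℂ) else 0 := by
  by_cases h : k = j
  · subst h; rw [if_pos rfl, DirectSum.lof_apply]
  · rw [if_neg h, DirectSum.lof_eq_of, DirectSum.of_eq_of_ne _ _ _ (Ne.symm h)]
    simp

lemma yProd_apply (n m : ℤ) (x : Prod13 n m) (j : ℕ) :
    yProd n m x j = yS n j m (x j) :=
  DFinsupp.mapRange_apply _ (fun i => (yS n i m).map_zero) x j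

lemma yProd_lof (n m : ℤ) (i : ℕ) (x : ↥(S13 n i m)) :
    yProd n m (DirectSum.lof ℂ ℕ (fun i' => ↥(S13 n i' m)) i x) =
      DirectSum.lof ℂ ℕ (fun i' => ↥(S13 n i' (m - 1))) i (yS n i m x) := by
  refine DFinsupp.ext fun j => Subtype.ext ?_
  rw [yProd_apply, yS_coe, coe_lof_apply n (m - 1) i j, coe_lof_apply n m i j]
  by_cases h : i = j
  · subst h; simp [yS_coe]
  · simp [h]

lemma shift13_apply_coe (n m : ℤ) (x : Prod13 n m) (j : ℕ) :
    ((shift13 n m x j : ℂ)) = if j = 0 then 0 else ((x (j - 1) : ℂ)) := by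
  induction x using DirectSum.induction_on with
  | zero => simp
  | of i xi =>
    rw [← DirectSum.lof_eq_of ℂ, shift13_lof, coe_lof_apply]
    cases j with
    | zero => simp
    | succ k =>
      rw [if_neg (Nat.succ_ne_zero k), Nat.succ_sub_one, coe_lof_apply]
      simp only [Submodule.coe_inclusion, Nat.add_right_cancel_iff]
  | add x y hx hy =>
    rw [map_add, DirectSum.add_apply, DirectSum.add_apply, Submodule.coe_add,
      Submodule.coe_add, hx, hy]
    split_ifs <;> ring

lemma oneMinusShift_apply_coe (n m : ℤ) (x : Prod13 n m) (j : ℕ) :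
    ((oneMinusShift n m x j : ℂ)) =
      (x j : ℂ) - if j = 0 then 0 else ((x (j - 1) : ℂ)) := by
  unfold oneMinusShift
  rw [LinearMap.sub_apply, LinearMap.id_apply, DFinsupp.sub_apply, AddSubgroupClass.coe_sub,
    shift13_apply_coe]

def q13 (n m : ℤ) : Prod13 n m →ₗ[ℂ] ↥(T13 n m) :=
  DirectSum.toModule ℂ ℕ ↥(T13 n m) (fun i => Submodule.inclusion (S13_le_T13 n i m))

lemma q13_lof (n m : ℤ) (i : ℕ) (x : ↥(S13 n i m)) :
    q13 n m (DirectSum.lof ℂ ℕ (fun i' => ↥(S13 n i' m)) i x) =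
      Submodule.inclusion (S13_le_T13 n i m) x := by
  unfold q13
  exact DirectSum.toModule_lof (N := ↥(T13 n m))
    (φ := fun i => Submodule.inclusion (S13_le_T13 n i m)) ℂ i x

lemma q13_coe (n m : ℤ) (x : Prod13 n m) :
    ((q13 n m x : ℂ)) = ∑ j ∈ x.support, ((x j : ℂ)) := by
  conv_lhs => rw [← DirectSum.sum_support_of x]
  rw [map_sum, AddSubmonoidClass.coe_finset_sum]
  refine Finset.sum_congr rfl fun j hj => ?_
  rw [← DirectSum.lof_eq_of ℂ, q13_lof]
  simp [Submodule.coe_inclusion]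

/-- in the derived category of dg modules over `S = ℂ[y]` (`y` of degree
`-1`, zero differential), the homotopy colimit `E_n` of
`X_0(n) →y X_1(n-1) →y X_2(n-2) → ⋯`, `X_i = ℂ[y]/(y^{i+1})`, is isomorphic to
`ℂ[y⁻¹](n)`: the defining map `1 - (shift)` on `⊕_ℕ X_i(n-i)` is a degreewise injective
morphism of dg modules whose cokernel is `ℂ[y⁻¹](n)`, i.e. there is a short exact sequence
`0 → ⊕ X_i(n-i) → ⊕ X_i(n-i) → ℂ[y⁻¹](n) → 0` of dg `S`-modules (all differentials being
zero, a dg morphism is a degreewise linear map commuting with the `y`-actions), so that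
the cone `E_n` is quasi-isomorphic to `ℂ[y⁻¹](n)`. -/
theorem stmt_13 (n : ℤ) :
    (∀ m : ℤ, yProd n m ∘ₗ oneMinusShift n m = oneMinusShift n (m - 1) ∘ₗ yProd n m) ∧
    (∀ m : ℤ, Function.Injective (oneMinusShift n m)) ∧
    ∃ q : ∀ m : ℤ, Prod13 n m →ₗ[ℂ] ↥(T13 n m),
      (∀ m : ℤ, yT n m ∘ₗ q m = q (m - 1) ∘ₗ yProd n m) ∧
      (∀ m : ℤ, Function.Surjective (q m)) ∧
      (∀ m : ℤ, LinearMap.range (oneMinusShift n m) = LinearMap.ker (q m)) := by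
  refine ⟨?_, ?_, fun m => q13 n m, ?_, ?_, ?_⟩
  · -- yProd commutes with oneMinusShift
    intro m
    refine LinearMap.ext fun x => DFinsupp.ext fun j => Subtype.ext ?_
    simp only [LinearMap.coe_comp, Function.comp_apply, yProd_apply, yS_coe,
      oneMinusShift_apply_coe]
    split_ifs <;> ring
  · -- injectivity
    intro m
    have key : ∀ x : Prod13 n m, oneMinusShift n m x = 0 → x = 0 := by
      intro x hx
      have hc : ∀ j : ℕ, ((x j : ℂ)) = if j = 0 then 0 else ((x (j - 1) : ℂ)) := by
        intro j
        have h1 : ((oneMinusShift n m x j : ℂ)) = 0 := by rw [hx]; simp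
        rw [oneMinusShift_apply_coe] at h1
        exact sub_eq_zero.mp h1
      have hz : ∀ j : ℕ, ((x j : ℂ)) = 0 := by
        intro j
        induction j with
        | zero => simpa using hc 0
        | succ k ih => rw [hc (k + 1)]; simpa using ih
      refine DFinsupp.ext fun j => Subtype.ext ?_
      simpa using hz j
    intro a b hab
    have h := key (a - b) (by rw [map_sub, hab, sub_self])
    exact sub_eq_zero.mp h
  · -- q commutes with y
    intro m
    refine DirectSum.linearMap_ext ℂ fun i => ?_
    refine LinearMap.ext fun xi => Subtype.ext ?_
    simp only [LinearMap.coe_comp, Function.comp_apply]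
    rw [q13_lof, yT_coe, yProd_lof, q13_lof]
    simp only [Submodule.coe_inclusion]
    rw [yS_coe]
  · -- surjectivity of q
    intro m t
    by_cases hm : -n ≤ m
    · set i : ℕ := (n + m).toNat with hi
      have hit : S13 n i m = ⊤ := by
        unfold S13
        rw [if_pos]
        refine ⟨hm, ?_⟩
        have : (i : ℤ) = n + m := Int.toNat_of_nonneg (by omega)
        omega
      refine ⟨DirectSum.lof ℂ ℕ (fun i' => ↥(S13 n i' m)) i ⟨(t : ℂ), by rw [hit]; trivial⟩, ?_⟩
      rw [q13_lof]
      exact Subtype.ext rfl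
    · have hb : T13 n m = ⊥ := by unfold T13; rw [if_neg hm]
      refine ⟨0, ?_⟩
      rw [map_zero]
      refine (Subtype.ext ?_).symm
      have h2 : (t : ℂ) = 0 := (Submodule.eq_bot_iff _).mp hb _ t.2
      simpa using h2
  · -- range = ker
    intro m
    refine le_antisymm ?_ ?_
    · rintro z ⟨x, rfl⟩
      have hcomp : q13 n m ∘ₗ oneMinusShift n m = 0 := by
        refine DirectSum.linearMap_ext ℂ fun i => ?_
        refine LinearMap.ext fun xi => Subtype.ext ?_
        simp only [LinearMap.coe_comp, Function.comp_apply, LinearMap.zero_comp,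
          LinearMap.zero_apply]
        unfold oneMinusShift
        rw [LinearMap.sub_apply, LinearMap.id_apply, map_sub, shift13_lof, q13_lof, q13_lof]
        simp [Submodule.coe_inclusion]
      rw [LinearMap.mem_ker]
      have := LinearMap.congr_fun hcomp x
      simpa using this
    · intro x hx
      rw [LinearMap.mem_ker] at hx
      set N : ℕ := x.support.sup id + 1 with hN
      have hsupp : ∀ j : ℕ, N ≤ j → ((x j : ℂ)) = 0 := by
        intro j hj
        have hmem : j ∉ x.support := by
          intro hmem
          have := Finset.le_sup (f := id) hmem
          simp only [id] at this
          omega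
        rw [DFinsupp.notMem_support_iff.mp hmem]
        simp
      have hsub : x.support ⊆ Finset.range N := by
        intro j hj
        rw [Finset.mem_range]
        have := Finset.le_sup (f := id) hj
        simp only [id] at this
        omega
      have hsum : ∑ j ∈ Finset.range N, ((x j : ℂ)) = 0 := by
        rw [← Finset.sum_subset hsub (fun j _ hj => by
          rw [DFinsupp.notMem_support_iff.mp hj]; simp)]
        rw [← q13_coe, hx]
        simp
      have hmem : ∀ i : ℕ, (∑ j ∈ Finset.range (i + 1), ((x j : ℂ))) ∈ S13 n i m := by
        intro i
        refine Submodule.sum_mem _ fun j hj => ?_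
        have hj' : j ≤ i := by
          have := Finset.mem_range.mp hj; omega
        exact S13_mono' n m hj' (x j).2
      set y : Prod13 n m := ∑ i ∈ Finset.range N,
        DirectSum.lof ℂ ℕ (fun i' => ↥(S13 n i' m)) i
          ⟨∑ j ∈ Finset.range (i + 1), ((x j : ℂ)), hmem i⟩ with hy
      have hyc : ∀ j : ℕ, ((y j : ℂ)) =
          if j < N then ∑ t ∈ Finset.range (j + 1), ((x t : ℂ)) else 0 := by
        intro j
        rw [hy, DFinsupp.finset_sum_apply, AddSubmonoidClass.coe_finset_sum]
        rw [Finset.sum_congr rfl fun i _ => coe_lof_apply n m i j _]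
        rw [Finset.sum_ite_eq' (Finset.range N) j]
        simp [Finset.mem_range]
      refine ⟨y, DFinsupp.ext fun j => Subtype.ext ?_⟩
      rw [oneMinusShift_apply_coe]
      cases j with
      | zero =>
        rw [if_pos rfl, hyc 0, if_pos (by omega : 0 < N), sub_zero, Finset.sum_range_one]
      | succ k =>
        rw [if_neg (Nat.succ_ne_zero k), Nat.succ_sub_one, hyc (k + 1), hyc k]
        by_cases h1 : k + 1 < N
        · rw [if_pos h1, if_pos (by omega : k < N), Finset.sum_range_succ]
          ring
        · rw [if_neg h1]
          have hxk : ((x (k + 1) : ℂ)) = 0 := hsupp _ (by omega)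
          rw [hxk]
          by_cases h2 : k < N
          · rw [if_pos h2]
            have hkN : k + 1 = N := by omega
            rw [hkN, hsum]
            ring
          · rw [if_neg h2]
            ring
end
end

section
/- Every triangulation of the completed ∞-gon containing a left fountain at a vertex n contains the infinite (wrapping) arc (−∞, n). -/
noncomputable section

/-- An arc of the completed ∞-gon: a pair `(a,b)` with `a < b`, where the endpoints lie in
`ℤ ∪ {-∞}` (modelled as `WithBot ℤ`, with `⊥ = -∞`) and the second endpoint is an integer. -/
def Arc : Type := {p : WithBot ℤ × ℤ // p.1 < (p.2 : WithBot ℤ)}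

/-- Two arcs `(a,b)` and `(c,d)` cross if `a < c < b < d` or `c < a < d < b`. -/
def Arc.Crosses (α β : Arc) : Prop :=
  (α.1.1 < β.1.1 ∧ β.1.1 < (α.1.2 : WithBot ℤ) ∧ α.1.2 < β.1.2) ∨
  (β.1.1 < α.1.1 ∧ α.1.1 < (β.1.2 : WithBot ℤ) ∧ β.1.2 < α.1.2)

/-- A triangulation of the completed ∞-gon: a maximal set of pairwise non-crossing arcs. -/
def IsTriangulation (T : Set Arc) : Prop :=
  (∀ α ∈ T, ∀ β ∈ T, ¬ α.Crosses β) ∧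
  (∀ γ : Arc, (∀ α ∈ T, ¬ γ.Crosses α) → γ ∈ T)

/-- `T` has a left fountain at `n`: it contains arcs `(bᵢ, n)` for a strictly decreasing
sequence of integers `bᵢ`. -/
def HasLeftFountain (T : Set Arc) (n : ℤ) : Prop :=
  ∃ b : ℕ → ℤ, StrictAnti b ∧ ∀ i : ℕ, ∃ α ∈ T, α.1 = (((b i : ℤ) : WithBot ℤ), n)

/-- every triangulation of the completed ∞-gon containing a left fountain at
`n` contains the wrapping arc `(-∞, n)`. -/
theorem stmt_14 (T : Set Arc) (hT : IsTriangulation T) (n : ℤ)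
    (h : HasLeftFountain T n) :
    ∃ α ∈ T, α.1 = ((⊥ : WithBot ℤ), n) := by
  obtain ⟨b, hb, hbT⟩ := h
  have hle : ∀ i : ℕ, b i ≤ b 0 - i := by
    intro i
    induction i with
    | zero => simp
    | succ k ih =>
      have : b (k+1) < b k := hb (by omega)
      push_cast
      push_cast at ih
      omega
  set γ : Arc := ⟨((⊥ : WithBot ℤ), n), by simp⟩ with hγ
  refine ⟨γ, hT.2 γ ?_, rfl⟩
  intro α hα hcr
  rcases hcr with ⟨h1, h2, h3⟩ | ⟨h1, _⟩
  · -- α = (c, d) with ⊥ < c < n < d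
    obtain ⟨c, hc⟩ := WithBot.ne_bot_iff_exists.mp (ne_of_gt h1)
    have hcn : c < n := by
      rw [← hc] at h2
      exact_mod_cast h2
    set i := (b 0 - c).toNat + 1 with hi
    have hbi : b i < c := by
      have := hle i
      have : b i ≤ b 0 - ((b 0 - c).toNat + 1 : ℕ) := this
      have h2' : (b 0 - c : ℤ) ≤ ((b 0 - c).toNat : ℤ) := Int.self_le_toNat _
      push_cast at this
      omega
    obtain ⟨β, hβT, hβ⟩ := hbT i
    exact hT.1 β hβT α hα (Or.inl ⟨by simp only [hβ, ← hc]; exact_mod_cast hbi,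
      by simp only [hβ, ← hc]; exact_mod_cast hcn, by simp only [hβ]; exact h3⟩)
  · exact absurd h1 (by simp [hγ])
end
end

section
/- Let T be a triangulation of the completed ∞-gon containing the infinite arc (−∞, n). Then either T has a left fountain at n, or there exists an integer m < n with (−∞, m) ∈ T. -/
noncomputable section

/-- if a triangulation `T` of the completed ∞-gon contains the infinite arc
`(-∞, n)`, then either `T` has a left fountain at `n`, or there exists an integer `m < n`
with `(-∞, m) ∈ T`. -/
theorem stmt_15 (T : Set Arc) (hT : IsTriangulation T) (n : ℤ)
    (h : ∃ α ∈ T, α.1 = ((⊥ : WithBot ℤ), n)) :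
    HasLeftFountain T n ∨ ∃ m : ℤ, m < n ∧ ∃ α ∈ T, α.1 = ((⊥ : WithBot ℤ), m) := by
  classical
  obtain ⟨α₀, hα₀T, hα₀⟩ := h
  have hα₀1 : α₀.1.1 = (⊥ : WithBot ℤ) := by rw [hα₀]
  have hα₀2 : α₀.1.2 = n := by rw [hα₀]
  by_cases hm : ∃ m : ℤ, m < n ∧ ∃ α ∈ T, α.1 = ((⊥ : WithBot ℤ), m)
  · exact Or.inr hm
  left
  -- Key step: for every m < n there is an arc (c,d) in T with c < m < d ≤ n.
  have key : ∀ m : ℤ, m < n →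
      ∃ c d : ℤ, c < m ∧ m < d ∧ d ≤ n ∧ ∃ α ∈ T, α.1 = (((c : ℤ) : WithBot ℤ), d) := by
    intro m hmn
    have hblt : (⊥ : WithBot ℤ) < (m : WithBot ℤ) := WithBot.bot_lt_coe m
    set γ : Arc := ⟨((⊥ : WithBot ℤ), m), hblt⟩ with hγdef
    have hγT : γ ∉ T := fun hh => hm ⟨m, hmn, γ, hh, rfl⟩
    have hex : ¬ ∀ α ∈ T, ¬ γ.Crosses α := fun hall => hγT (hT.2 γ hall)
    push_neg at hex
    obtain ⟨α, hαT, hcr⟩ := hex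
    have hγ1 : γ.1.1 = (⊥ : WithBot ℤ) := rfl
    have hγ2 : γ.1.2 = m := rfl
    rcases hcr with ⟨h1, h2, h3⟩ | ⟨h1, _⟩
    · rw [hγ1] at h1
      rw [hγ2] at h2 h3
      obtain ⟨c, hc⟩ : ∃ c : ℤ, α.1.1 = ((c : ℤ) : WithBot ℤ) := by
        rcases WithBot.ne_bot_iff_exists.mp h1.ne' with ⟨c, hc⟩
        exact ⟨c, hc.symm⟩
      have hcm : c < m := by
        rw [hc] at h2; exact_mod_cast h2
      have hdn : α.1.2 ≤ n := by
        by_contra hlt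
        push_neg at hlt
        apply hT.1 α hαT α₀ hα₀T
        right
        refine ⟨?_, ?_, ?_⟩
        · rw [hα₀1]; exact h1
        · rw [hα₀2, hc]; exact_mod_cast (hcm.trans hmn)
        · rw [hα₀2]; exact hlt
      refine ⟨c, α.1.2, hcm, h3, hdn, α, hαT, ?_⟩
      rw [← hc]
    · rw [hγ1] at h1
      exact absurd h1 (not_lt_bot)
  choose cf df hcf hdf hdn harc using key
  -- Build the nested sequence of arcs.
  let A : ℕ → {x : ℤ // x < n} := fun k =>
    Nat.rec ⟨n - 1, by omega⟩
      (fun _ p => ⟨cf p.1 p.2, lt_trans (hcf p.1 p.2) p.2⟩) k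
  have hAsucc : ∀ k, (A (k + 1)).1 = cf (A k).1 (A k).2 := fun k => rfl
  set a : ℕ → ℤ := fun k => (A k).1 with ha
  set d : ℕ → ℤ := fun k => df (A k).1 (A k).2 with hd
  have haanti : ∀ k, a (k + 1) < a k := by
    intro k
    have := hcf (A k).1 (A k).2
    simpa [ha, hAsucc k] using this
  have haSA : StrictAnti a := strictAnti_nat_of_succ_lt haanti
  have hadlt : ∀ k, a k < d k := fun k => hdf (A k).1 (A k).2
  have hdlen : ∀ k, d k ≤ n := fun k => hdn (A k).1 (A k).2
  have harc' : ∀ k, ∃ α ∈ T, α.1 = (((a (k + 1) : ℤ) : WithBot ℤ), d k) := by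
    intro k
    have := harc (A k).1 (A k).2
    simpa [ha, hd, hAsucc k] using this
  -- d is monotone
  have hdmono : Monotone d := by
    apply monotone_nat_of_le_succ
    intro k
    by_contra hlt
    push_neg at hlt
    obtain ⟨β, hβT, hβ⟩ := harc' k
    obtain ⟨β', hβ'T, hβ'⟩ := harc' (k + 1)
    apply hT.1 β' hβ'T β hβT
    left
    have hβ1 : β.1.1 = ((a (k + 1) : ℤ) : WithBot ℤ) := by rw [hβ]
    have hβ2 : β.1.2 = d k := by rw [hβ]
    have hβ'1 : β'.1.1 = ((a (k + 2) : ℤ) : WithBot ℤ) := by rw [hβ']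
    have hβ'2 : β'.1.2 = d (k + 1) := by rw [hβ']
    refine ⟨?_, ?_, ?_⟩
    · rw [hβ1, hβ'1]; exact_mod_cast haanti (k + 1)
    · rw [hβ1, hβ'2]; exact_mod_cast hadlt (k + 1)
    · rw [hβ2, hβ'2]; exact hlt
  -- d stabilizes at its greatest value D
  obtain ⟨D, ⟨K, hK⟩, hmax⟩ :=
    Int.exists_greatest_of_bdd (P := fun z => ∃ k, d k = z)
      ⟨n, fun z ⟨k, hk⟩ => hk ▸ hdlen k⟩ ⟨d 0, 0, rfl⟩
  have hstab : ∀ k, K ≤ k → d k = D := by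
    intro k hk
    have h1 : d k ≤ D := hmax (d k) ⟨k, rfl⟩
    have h2 : D ≤ d k := hK ▸ hdmono hk
    omega
  have hDn : D ≤ n := hK ▸ hdlen K
  -- lower bound escape for a
  have habound : ∀ k : ℕ, a k ≤ a 0 - k := by
    intro k
    induction k with
    | zero => simp
    | succ k ih =>
      have := haanti k
      push_cast
      omega
  rcases eq_or_lt_of_le hDn with hDeq | hDlt
  · -- D = n : left fountain at n
    refine ⟨fun i => a (K + i + 1), ?_, ?_⟩
    · intro i j hij
      exact haSA (show K + i + 1 < K + j + 1 by omega)
    · intro i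
      have := harc' (K + i)
      rwa [hstab (K + i) (by omega), hDeq] at this
  · -- D < n : then (⊥, D) is in T, contradiction
    exfalso
    have hblt : (⊥ : WithBot ℤ) < (D : WithBot ℤ) := WithBot.bot_lt_coe D
    set γ : Arc := ⟨((⊥ : WithBot ℤ), D), hblt⟩ with hγdef
    have hγT : γ ∈ T := by
      apply hT.2
      intro α hαT hcr
      have hγ1 : γ.1.1 = (⊥ : WithBot ℤ) := rfl
      have hγ2 : γ.1.2 = D := rfl
      rcases hcr with ⟨h1, h2, h3⟩ | ⟨h1, _⟩
      · rw [hγ1] at h1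
        rw [hγ2] at h2 h3
        obtain ⟨c, hc⟩ : ∃ c : ℤ, α.1.1 = ((c : ℤ) : WithBot ℤ) := by
          rcases WithBot.ne_bot_iff_exists.mp h1.ne' with ⟨c, hc⟩
          exact ⟨c, hc.symm⟩
        have hcD : c < D := by rw [hc] at h2; exact_mod_cast h2
        -- pick k ≥ K with a (k+1) < c
        set k : ℕ := (a 0 - c).toNat + K with hkdef
        have hk1 : K ≤ k := by omega
        have hk2 : a (k + 1) < c := by
          have h4 := habound (k + 1)
          have h5 : (a 0 - c : ℤ) ≤ ((a 0 - c).toNat : ℤ) := Int.self_le_toNat _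
          push_cast at h4
          omega
        obtain ⟨β, hβT, hβ⟩ := harc' k
        rw [hstab k hk1] at hβ
        apply hT.1 β hβT α hαT
        left
        have hβ1 : β.1.1 = ((a (k + 1) : ℤ) : WithBot ℤ) := by rw [hβ]
        have hβ2 : β.1.2 = D := by rw [hβ]
        refine ⟨?_, ?_, ?_⟩
        · rw [hβ1, hc]; exact_mod_cast hk2
        · rw [hβ2, hc]; exact_mod_cast hcD
        · rw [hβ2]; exact h3
      · rw [hγ1] at h1
        exact absurd h1 (not_lt_bot)
    exact hm ⟨D, hDlt, γ, hγT, rfl⟩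
end
end

section
/- Let C be a Frobenius category whose stable category is C̄, with projection functor π : C → C̄, and let T be a full subcategory of C containing all projective-injective objects such that every object of C admits a projective precover. If M ∈ C is such that π(M) admits a π(T)-precover in C̄, then M admits a T-precover in C. -/
open CategoryTheory CategoryTheory.Limits

/-- Let `C` be a Frobenius category (here: an additive category `C` together
with a class `P` of objects, the projective-injectives, such that every object admits a
projective precover), and let `T` be a full additive subcategory containing all
projective-injective objects.  If `M ∈ C` is such that its image `π(M)` in the stable
category `C̄ = C/P` admits a `π(T)`-precover — i.e. there are `T₀ ∈ T` and `f : T₀ ⟶ M`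
such that every map `T' ⟶ M` from `T' ∈ T` factors through `f` up to a map factoring
through an object of `P` — then `M` admits a genuine `T`-precover in `C`. -/
theorem stmt_18 {C : Type*} [Category C] [Preadditive C] [HasBinaryBiproducts C]
    (P T : Set C) (hPT : P ⊆ T)
    (hTadd : ∀ X ∈ T, ∀ Y ∈ T, (X ⊞ Y) ∈ T)
    (hproj : ∀ M : C, ∃ (PM : C) (_ : PM ∈ P) (p : PM ⟶ M),
      ∀ Q ∈ P, ∀ g : Q ⟶ M, ∃ h : Q ⟶ PM, h ≫ p = g)
    (M : C)
    (hstable : ∃ (T₀ : C) (_ : T₀ ∈ T) (f : T₀ ⟶ M),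
      ∀ T' ∈ T, ∀ g : T' ⟶ M, ∃ (h : T' ⟶ T₀) (Q : C) (_ : Q ∈ P)
        (u : T' ⟶ Q) (v : Q ⟶ M), g - h ≫ f = u ≫ v) :
    ∃ (T₁ : C) (_ : T₁ ∈ T) (f' : T₁ ⟶ M),
      ∀ T' ∈ T, ∀ g : T' ⟶ M, ∃ h : T' ⟶ T₁, h ≫ f' = g := by
  obtain ⟨T₀, hT₀, f, hf⟩ := hstable
  obtain ⟨PM, hPM, p, hp⟩ := hproj M
  refine ⟨T₀ ⊞ PM, hTadd _ hT₀ _ (hPT hPM), biprod.desc f p, ?_⟩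
  intro T' hT' g
  obtain ⟨h, Q, hQ, u, v, huv⟩ := hf T' hT' g
  obtain ⟨k, hk⟩ := hp Q hQ v
  refine ⟨biprod.lift h (u ≫ k), ?_⟩
  simp only [biprod.lift_desc, Category.assoc, hk]
  rw [← huv]
  abel
end
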